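/- Let A be a Banach algebra, X a Banach A-bimodule, and n ≥ 1. If every continuous derivation from A into the (n+2)-th dual X^{(n+2)} is inner, then every continuous derivation from A into the n-th dual X^{(n)} is inner. -/
import Mathlib


open ContinuousLinearMap Filter Topology

namespace Paper

structure Bimod (A : Type*) [NormedRing A] [NormedAlgebra ℂ A]
    (X : Type*) [NormedAddCommGroup X] [NormedSpace ℂ X] where
  l : A → X →L[ℂ] X
  r : A → X →L[ℂ] X
  l_mul : ∀ a b x, l (a * b) x = l a (l b x)
  r_mul : ∀ a b x, r (a * b) x = r b (r a x)
  lr : ∀ a b x, l a (r b x) = r b (l a x)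

variable {A : Type*} [NormedRing A] [NormedAlgebra ℂ A]
variable {X : Type*} [NormedAddCommGroup X] [NormedSpace ℂ X]

noncomputable def Bimod.dual (M : Bimod A X) : Bimod A (X →L[ℂ] ℂ) where
  l a := (compL ℂ X X ℂ).flip (M.r a)
  r a := (compL ℂ X X ℂ).flip (M.l a)
  l_mul a b f := by ext x; simp [M.r_mul]
  r_mul a b f := by ext x; simp [M.l_mul]
  lr a b f := by ext x; simp [M.lr]

def IsDerivation (M : Bimod A X) (D : A →L[ℂ] X) : Prop :=
  ∀ a b, D (a * b) = M.l a (D b) + M.r b (D a)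

def IsInner (M : Bimod A X) (D : A →L[ℂ] X) : Prop :=
  ∃ x, ∀ a, D a = M.l a x - M.r a x

noncomputable def Bimod.restrict (M : Bimod A X) (Y : Submodule ℂ X)
    (hl : ∀ a, ∀ y ∈ Y, M.l a y ∈ Y) (hr : ∀ a, ∀ y ∈ Y, M.r a y ∈ Y) :
    Bimod A Y where
  l a := ((M.l a).comp Y.subtypeL).codRestrict Y fun y => hl a y y.2
  r a := ((M.r a).comp Y.subtypeL).codRestrict Y fun y => hr a y y.2
  l_mul a b y := Subtype.ext (M.l_mul a b y)
  r_mul a b y := Subtype.ext (M.r_mul a b y)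
  lr a b y := Subtype.ext (M.lr a b y)

noncomputable def algBimod (A : Type*) [NormedRing A] [NormedAlgebra ℂ A] : Bimod A A where
  l a := ContinuousLinearMap.mul ℂ A a
  r a := (ContinuousLinearMap.mul ℂ A).flip a
  l_mul a b x := mul_assoc a b x
  r_mul a b x := (mul_assoc x a b).symm
  lr a b x := (mul_assoc a x b).symm

noncomputable def idealBimod (I : Submodule ℂ A)
    (hL : ∀ a, ∀ x ∈ I, a * x ∈ I) (hR : ∀ a, ∀ x ∈ I, x * a ∈ I) :
    Bimod A I where
  l a := ((ContinuousLinearMap.mul ℂ A a).comp I.subtypeL).codRestrict I fun x => hL a x x.2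
  r a := (((ContinuousLinearMap.mul ℂ A).flip a).comp I.subtypeL).codRestrict I fun x => hR a x x.2
  l_mul a b x := Subtype.ext (mul_assoc a b (x : A))
  r_mul a b x := Subtype.ext (mul_assoc (x : A) a b).symm
  lr a b x := Subtype.ext (mul_assoc a (x : A) b).symm

structure BBM (A : Type*) [NormedRing A] [NormedAlgebra ℂ A] where
  carrier : Type*
  [grp : NormedAddCommGroup carrier]
  [mod : NormedSpace ℂ carrier]
  bimod : Bimod A carrier

attribute [instance] BBM.grp BBM.mod

noncomputable def BBM.dual {A : Type*} [NormedRing A] [NormedAlgebra ℂ A]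
    (M : BBM A) : BBM A :=
  { carrier := M.carrier →L[ℂ] ℂ
    bimod := M.bimod.dual }

noncomputable def inclB (N : BBM A) : N.carrier →L[ℂ] N.dual.dual.carrier :=
  (ContinuousLinearMap.id ℂ (N.dual.carrier)).flip

lemma inclB_l (N : BBM A) (a : A) (x : N.carrier) :
    N.dual.dual.bimod.l a (inclB N x) = inclB N (N.bimod.l a x) := by
  exact ContinuousLinearMap.ext fun f => rfl

lemma inclB_r (N : BBM A) (a : A) (x : N.carrier) :
    N.dual.dual.bimod.r a (inclB N x) = inclB N (N.bimod.r a x) := by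
  exact ContinuousLinearMap.ext fun f => rfl

/-- The canonical projection from the triple dual onto the first dual
(the adjoint of the canonical embedding). -/
noncomputable def projB (N : BBM A) : N.dual.dual.dual.carrier →L[ℂ] N.dual.carrier :=
  (compL ℂ N.carrier N.dual.dual.carrier ℂ).flip (inclB N)

lemma projB_l (N : BBM A) (a : A) (F : N.dual.dual.dual.carrier) :
    projB N (N.dual.dual.dual.bimod.l a F) = N.dual.bimod.l a (projB N F) := by
  refine ContinuousLinearMap.ext fun x => ?_
  exact congrArg (fun (g : N.dual.dual.carrier) =>
    (show N.dual.dual.carrier →L[ℂ] ℂ from F) g) (inclB_r N a x)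

lemma projB_r (N : BBM A) (a : A) (F : N.dual.dual.dual.carrier) :
    projB N (N.dual.dual.dual.bimod.r a F) = N.dual.bimod.r a (projB N F) := by
  refine ContinuousLinearMap.ext fun x => ?_
  exact congrArg (fun (g : N.dual.dual.carrier) =>
    (show N.dual.dual.carrier →L[ℂ] ℂ from F) g) (inclB_l N a x)

lemma projB_inclB (N : BBM A) (g : N.dual.carrier) :
    projB N (inclB N.dual g) = g := by
  exact ContinuousLinearMap.ext fun x => rfl

theorem key (N : BBM A)
    (h : ∀ D : A →L[ℂ] N.dual.dual.dual.carrier,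
        IsDerivation N.dual.dual.dual.bimod D → IsInner N.dual.dual.dual.bimod D) :
    ∀ D : A →L[ℂ] N.dual.carrier,
      IsDerivation N.dual.bimod D → IsInner N.dual.bimod D := by
  intro D hD
  have hD' : IsDerivation N.dual.dual.dual.bimod ((inclB N.dual).comp D) := by
    intro a b
    have : (inclB N.dual).comp D (a * b) = inclB N.dual (D (a * b)) := rfl
    rw [this, hD a b, map_add, ← inclB_l N.dual, ← inclB_r N.dual]
    rfl
  obtain ⟨F, hF⟩ := h _ hD'
  refine ⟨projB N F, fun a => ?_⟩
  have h1 : D a = projB N ((inclB N.dual).comp D a) := (projB_inclB N (D a)).symm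
  rw [h1, hF a, map_sub, projB_l, projB_r]

theorem stmt_3
    {A : Type*} [NormedRing A] [NormedAlgebra ℂ A] [CompleteSpace A]
    (M : BBM A) [CompleteSpace M.carrier] (n : ℕ) (hn : 1 ≤ n)
    (h : ∀ D : A →L[ℂ] (BBM.dual^[n + 2] M).carrier,
        IsDerivation (BBM.dual^[n + 2] M).bimod D → IsInner (BBM.dual^[n + 2] M).bimod D) :
    ∀ D : A →L[ℂ] (BBM.dual^[n] M).carrier,
      IsDerivation (BBM.dual^[n] M).bimod D → IsInner (BBM.dual^[n] M).bimod D := by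
  obtain ⟨m, rfl⟩ : ∃ m, n = m + 1 := ⟨n - 1, (Nat.succ_pred_eq_of_pos hn).symm⟩
  rw [show m + 1 + 2 = m + 1 + 1 + 1 from rfl] at h
  rw [Function.iterate_succ_apply', Function.iterate_succ_apply',
    Function.iterate_succ_apply'] at h
  rw [Function.iterate_succ_apply']
  exact key (BBM.dual^[m] M) h

end Paper
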